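/- Let A be a Γ-graded ring, h ∈ GL_n(A)(α_1,...,α_n), and r ∈ A_λ an invertible homogeneous element. Then diag(h, r h⁻¹ r⁻¹) = [[I, h r⁻¹],[0, I]] · [[I, 0],[-r h⁻¹, I]] · [[I, h r⁻¹],[0, I]] · [[0, -r⁻¹ I],[r I, 0]], and hence diag(h, r h⁻¹ r⁻¹) ∈ E_{2n}(A)(α_1,...,α_n, λ+α_1,...,λ+α_n). -/

import Mathlib

open Matrix

/-- The graded elementary group `E(A)(β)` for a family `β : ι → Γ`: the subgroup of
invertible matrices generated by the elementary matrices `e_{i,j}(a) = 1 + a·E_{ij}` with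
`a ∈ A_{βᵢ - βⱼ}`, `i ≠ j`. -/
def gradedElementary {Γ A : Type*} [AddCommGroup Γ] [Ring A] (𝒜 : Γ → AddSubgroup A)
    (ι : Type*) [DecidableEq ι] [Fintype ι] (β : ι → Γ) : Subgroup (Matrix ι ι A)ˣ :=
  Subgroup.closure {g : (Matrix ι ι A)ˣ | ∃ i j : ι, ∃ a : A, i ≠ j ∧ a ∈ 𝒜 (β i - β j) ∧
    g.val = 1 + Matrix.single i j a}

section Aux

set_option linter.unusedSectionVars false

/-- Product of pairwise-annihilating perturbations of `1`. -/
lemma noncommProd_one_add {R σ : Type*} [Ring R] (B : σ → R)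
    (h0 : ∀ p q, B p * B q = 0) (s : Finset σ) :
    ∀ comm, s.noncommProd (fun p => 1 + B p) comm = 1 + ∑ p ∈ s, B p := by
  induction s using Finset.cons_induction with
  | empty => intro _; simp
  | cons a s ha ih =>
    intro comm
    rw [Finset.noncommProd_cons, ih, Finset.sum_cons, mul_add, mul_one, add_mul, one_mul,
      Finset.mul_sum]
    have : ∑ p ∈ s, B a * B p = 0 := Finset.sum_eq_zero fun p _ => h0 a p
    rw [this]
    abel

lemma one_add_comm {R σ : Type*} [Ring R] (B : σ → R)
    (h0 : ∀ p q, B p * B q = 0) (p q : σ) :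
    (1 + B p) * (1 + B q) = (1 + B q) * (1 + B p) := by
  rw [mul_add, mul_one, add_mul, one_mul, h0, mul_add, mul_one, add_mul, one_mul, h0]
  abel

variable {Γ A : Type*} [AddCommGroup Γ] [DecidableEq Γ] [Ring A]

/-- The inverse of a homogeneous unit of degree `lam` is homogeneous of degree `-lam`. -/
lemma inv_unit_mem_neg (𝒜 : Γ → AddSubgroup A) [GradedRing 𝒜] {lam : Γ} (u : Aˣ)
    (hu : (u : A) ∈ 𝒜 lam) : ((↑u⁻¹ : A)) ∈ 𝒜 (-lam) := by
  classical
  set v : A := (↑u⁻¹ : A) with hv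
  have hcomp : ∀ γ : Γ, γ ≠ -lam → (DirectSum.decompose 𝒜 v γ : A) = 0 := by
    intro γ hγ
    have h1 : (DirectSum.decompose 𝒜 ((u : A) * v) (lam + γ) : A)
        = (u : A) * (DirectSum.decompose 𝒜 v γ : A) :=
      DirectSum.coe_decompose_mul_add_of_left_mem 𝒜 hu
    have h2 : (u : A) * v = 1 := u.mul_inv
    have h3 : (0 : Γ) ≠ lam + γ := by
      intro hc
      exact hγ (by rw [eq_neg_iff_add_eq_zero, add_comm, ← hc])
    rw [h2, DirectSum.decompose_of_mem_ne 𝒜 (SetLike.one_mem_graded 𝒜) h3] at h1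
    have := congrArg (fun x => v * x) h1.symm
    simpa [← mul_assoc, hv, u.inv_mul] using this
  have hsum := DirectSum.sum_support_decompose 𝒜 v
  rw [← hsum]
  refine AddSubgroup.sum_mem _ ?_
  intro γ _
  by_cases hγ : γ = -lam
  · subst hγ; exact SetLike.coe_mem _
  · rw [hcomp γ hγ]; exact zero_mem _

/-- A "block-unipotent" matrix `1 + N` lies in the graded elementary group, provided the
nonzero entries of `N` are homogeneous of the right degrees and are supported on positions
`(i, j)` with `P i` and `¬ P j`. -/
lemma unipotent_mem (𝒜 : Γ → AddSubgroup A) {ι : Type*} [DecidableEq ι] [Fintype ι]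
    (β : ι → Γ) (N : Matrix ι ι A) (P : ι → Prop)
    (hP : ∀ i j, N i j ≠ 0 → P i ∧ ¬ P j)
    (hdeg : ∀ i j, N i j ∈ 𝒜 (β i - β j)) :
    ∃ e ∈ gradedElementary 𝒜 ι β, e.val = 1 + N := by
  classical
  set B : ι × ι → Matrix ι ι A := fun p => single p.1 p.2 (N p.1 p.2) with hB
  have h0 : ∀ p q, B p * B q = 0 := by
    intro p q
    by_cases h1 : N p.1 p.2 = 0
    · simp [hB, h1]
    by_cases h2 : N q.1 q.2 = 0
    · simp [hB, h2]
    · have hne : p.2 ≠ q.1 := fun hc => (hP _ _ h1).2 (hc ▸ (hP _ _ h2).1)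
      simp only [hB]
      exact Matrix.single_mul_single_of_ne (N p.1 p.2) p.1 p.2 q.1 hne (N q.1 q.2)
  set E : ι × ι → (Matrix ι ι A)ˣ := fun p =>
    ⟨1 + B p, 1 - B p,
      by rw [mul_sub, mul_one, add_mul, one_mul, h0 p p]; abel,
      by rw [sub_mul, one_mul, mul_add, mul_one, h0 p p]; abel⟩ with hE
  have hEmem : ∀ p, E p ∈ gradedElementary 𝒜 ι β := by
    intro p
    by_cases h1 : N p.1 p.2 = 0
    · have : E p = 1 := Units.ext (by simp [hE, hB, h1])
      rw [this]; exact one_mem _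
    · apply Subgroup.subset_closure
      refine ⟨p.1, p.2, N p.1 p.2, ?_, hdeg _ _, rfl⟩
      intro hc
      exact (hP _ _ h1).2 (hc ▸ (hP _ _ h1).1)
  have comm : ((Finset.univ : Finset (ι × ι)) : Set (ι × ι)).Pairwise (Function.onFun Commute E) := by
    intro a _ b _ _
    exact Units.ext (by simpa [hE, Units.val_mul] using one_add_comm B h0 a b)
  refine ⟨Finset.univ.noncommProd E comm,
    Subgroup.noncommProd_mem _ comm (fun p _ => hEmem p), ?_⟩
  have hmap := Finset.univ.map_noncommProd E comm (Units.coeHom (Matrix ι ι A))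
  rw [Units.coeHom_apply] at hmap
  rw [hmap]
  have : (fun p => (Units.coeHom (Matrix ι ι A)) (E p)) = fun p => 1 + B p := rfl
  refine (Finset.noncommProd_congr rfl (fun p _ => congrFun this p) _).trans ?_
  refine (noncommProd_one_add B h0 _ _).trans ?_
  congr 1
  rw [Matrix.matrix_eq_sum_single N, ← Finset.sum_product']
  rfl

lemma upper_mem (𝒜 : Γ → AddSubgroup A) {n : ℕ} (β : Fin n ⊕ Fin n → Γ)
    (M : Matrix (Fin n) (Fin n) A)
    (hM : ∀ i j, M i j ∈ 𝒜 (β (Sum.inl i) - β (Sum.inr j))) :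
    ∃ e ∈ gradedElementary 𝒜 (Fin n ⊕ Fin n) β,
      e.val = fromBlocks 1 M 0 1 := by
  obtain ⟨e, he, hval⟩ := unipotent_mem 𝒜 β (fromBlocks 0 M 0 0) (fun i => i.isLeft = true)
    (by rintro (i|i) (j|j) hne <;> simp_all [fromBlocks])
    (by rintro (i|i) (j|j) <;> simp [fromBlocks] <;> first | exact zero_mem _ | exact hM i j)
  refine ⟨e, he, ?_⟩
  rw [hval, ← fromBlocks_one, fromBlocks_add]
  simp

lemma lower_mem (𝒜 : Γ → AddSubgroup A) {n : ℕ} (β : Fin n ⊕ Fin n → Γ)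
    (M : Matrix (Fin n) (Fin n) A)
    (hM : ∀ i j, M i j ∈ 𝒜 (β (Sum.inr i) - β (Sum.inl j))) :
    ∃ e ∈ gradedElementary 𝒜 (Fin n ⊕ Fin n) β,
      e.val = fromBlocks 1 0 M 1 := by
  obtain ⟨e, he, hval⟩ := unipotent_mem 𝒜 β (fromBlocks 0 0 M 0) (fun i => i.isRight = true)
    (by rintro (i|i) (j|j) hne <;> simp_all [fromBlocks])
    (by rintro (i|i) (j|j) <;> simp [fromBlocks] <;> first | exact zero_mem _ | exact hM i j)
  refine ⟨e, he, ?_⟩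
  rw [hval, ← fromBlocks_one, fromBlocks_add]
  simp

end Aux

set_option maxHeartbeats 1600000

/-- Let `A` be a `Γ`-graded ring, `h ∈ GLₙ(A)(α₁,…,αₙ)` and `r ∈ A_λ` an invertible
homogeneous element.  Then
`diag(h, r h⁻¹ r⁻¹) = [[I, h r⁻¹],[0, I]] · [[I, 0],[-r h⁻¹, I]] · [[I, h r⁻¹],[0, I]] ·
[[0, -r⁻¹I],[rI, 0]]`, and hence `diag(h, r h⁻¹ r⁻¹) ∈ E_{2n}(A)(α₁,…,αₙ,λ+α₁,…,λ+αₙ)`. -/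
theorem diag_h_conj_in_elementary {Γ A : Type*} [AddCommGroup Γ] [DecidableEq Γ]
    [Ring A] (𝒜 : Γ → AddSubgroup A) [GradedRing 𝒜] {n : ℕ} (α : Fin n → Γ)
    (h : (Matrix (Fin n) (Fin n) A)ˣ)
    (hh : ∀ i j : Fin n, h.val i j ∈ 𝒜 (α i - α j))
    (hh' : ∀ i j : Fin n, (h⁻¹).val i j ∈ 𝒜 (α i - α j))
    (lam : Γ) (u : Aˣ) (hu : (u : A) ∈ 𝒜 lam) :
    fromBlocks (h.val) 0 0 (((↑u : A) • 1) * (h⁻¹).val * ((↑u⁻¹ : A) • 1)) =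
        (fromBlocks (1 : Matrix (Fin n) (Fin n) A) (h.val * ((↑u⁻¹ : A) • 1)) 0 1 :
            Matrix (Fin n ⊕ Fin n) (Fin n ⊕ Fin n) A) *
          (fromBlocks 1 0 (-(((↑u : A) • 1) * (h⁻¹).val)) 1 :
            Matrix (Fin n ⊕ Fin n) (Fin n ⊕ Fin n) A) *
          (fromBlocks 1 (h.val * ((↑u⁻¹ : A) • 1)) 0 1 :
            Matrix (Fin n ⊕ Fin n) (Fin n ⊕ Fin n) A) *
          (fromBlocks 0 (-((↑u⁻¹ : A) • 1)) ((↑u : A) • 1) 0 :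
            Matrix (Fin n ⊕ Fin n) (Fin n ⊕ Fin n) A) ∧
      ∃ e ∈ gradedElementary 𝒜 (Fin n ⊕ Fin n) (Sum.elim α fun i => lam + α i),
        e.val = fromBlocks (h.val) 0 0 (((↑u : A) • 1) * (h⁻¹).val * ((↑u⁻¹ : A) • 1)) := by
  classical
  have hg : h.val * (h⁻¹).val = 1 := by
    rw [← Units.val_mul, mul_inv_cancel, Units.val_one]
  have hgh : (h⁻¹).val * h.val = 1 := by
    rw [← Units.val_mul, inv_mul_cancel, Units.val_one]
  have key1 : ((↑u⁻¹ : A) • (1 : Matrix (Fin n) (Fin n) A)) * ((↑u : A) • 1) = 1 := by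
    rw [smul_mul_assoc, one_mul, smul_smul, Units.inv_mul, one_smul]
  have key2 : ((↑u : A) • (1 : Matrix (Fin n) (Fin n) A)) * ((↑u⁻¹ : A) • 1) = 1 := by
    rw [smul_mul_assoc, one_mul, smul_smul, Units.mul_inv, one_smul]
  have huinv : ((↑u⁻¹ : A)) ∈ 𝒜 (-lam) := inv_unit_mem_neg 𝒜 u hu
  set β : Fin n ⊕ Fin n → Γ := Sum.elim α fun i => lam + α i with hβ
  -- Part 1: the matrix identity
  have identity : fromBlocks (h.val) 0 0 (((↑u : A) • 1) * (h⁻¹).val * ((↑u⁻¹ : A) • 1)) =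
        (fromBlocks (1 : Matrix (Fin n) (Fin n) A) (h.val * ((↑u⁻¹ : A) • 1)) 0 1 :
            Matrix (Fin n ⊕ Fin n) (Fin n ⊕ Fin n) A) *
          (fromBlocks 1 0 (-(((↑u : A) • 1) * (h⁻¹).val)) 1) *
          (fromBlocks 1 (h.val * ((↑u⁻¹ : A) • 1)) 0 1) *
          (fromBlocks 0 (-((↑u⁻¹ : A) • 1)) ((↑u : A) • 1) 0) := by
    simp only [fromBlocks_multiply, Matrix.mul_one, Matrix.one_mul, Matrix.mul_zero,
      Matrix.zero_mul, add_zero, zero_add, Matrix.neg_mul, Matrix.mul_neg, neg_neg]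
    have fact1 : h.val * ((↑u⁻¹:A) • 1) * (((↑u:A) • 1) * (h⁻¹).val) = 1 := by
      rw [mul_assoc, ← mul_assoc ((↑u⁻¹:A) • (1 : Matrix (Fin n) (Fin n) A)), key1, one_mul, hg]
    have fact2 : ((↑u:A) • 1) * (h⁻¹).val * (h.val * ((↑u⁻¹:A) • 1)) = 1 := by
      rw [mul_assoc, ← mul_assoc (h⁻¹).val, hgh, one_mul, key2]
    rw [fact1, fact2]
    simp only [add_neg_cancel, neg_add_cancel, Matrix.zero_mul, zero_add, neg_zero,
      Matrix.neg_mul, zero_mul]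
    rw [mul_assoc (h.val), key1, mul_one]
  refine ⟨identity, ?_⟩
  -- entry computations for the blocks
  have entry_r : ∀ (X : Matrix (Fin n) (Fin n) A) (c : A) (i j : Fin n),
      (X * (c • (1 : Matrix (Fin n) (Fin n) A))) i j = X i j * c := by
    intro X c i j
    simp [Matrix.mul_apply, Matrix.one_apply, mul_ite, Finset.sum_ite_eq']
  have entry_l : ∀ (X : Matrix (Fin n) (Fin n) A) (c : A) (i j : Fin n),
      ((c • (1 : Matrix (Fin n) (Fin n) A)) * X) i j = c * X i j := by
    intro X c i j
    rw [smul_mul_assoc, one_mul, Matrix.smul_apply, smul_eq_mul]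
  -- the four elementary factors
  obtain ⟨e1, he1, hv1⟩ := upper_mem 𝒜 β (h.val * ((↑u⁻¹ : A) • 1)) (by
    intro i j
    rw [entry_r]
    have := SetLike.mul_mem_graded (hh i j) huinv
    rw [hβ]
    simpa [show α i - α j + -lam = α i - (lam + α j) by abel] using this)
  obtain ⟨e2, he2, hv2⟩ := lower_mem 𝒜 β (-(((↑u : A) • 1) * (h⁻¹).val)) (by
    intro i j
    rw [Matrix.neg_apply, entry_l]
    refine neg_mem ?_
    have := SetLike.mul_mem_graded hu (hh' i j)
    rw [hβ]
    simpa [show lam + (α i - α j) = lam + α i - α j by abel] using this)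
  obtain ⟨f1, hf1, hw1⟩ := upper_mem 𝒜 β (-((↑u⁻¹ : A) • 1)) (by
    intro i j
    rw [Matrix.neg_apply, Matrix.smul_apply, Matrix.one_apply]
    by_cases hij : i = j
    · subst hij
      simp only [if_pos rfl, smul_eq_mul, mul_one]
      refine neg_mem ?_
      rw [hβ]
      simpa [show α i - (lam + α i) = -lam by abel] using huinv
    · simp only [if_neg hij, smul_zero, neg_zero]
      exact zero_mem _)
  obtain ⟨f2, hf2, hw2⟩ := lower_mem 𝒜 β ((↑u : A) • 1) (by
    intro i j
    rw [Matrix.smul_apply, Matrix.one_apply]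
    by_cases hij : i = j
    · subst hij
      simp only [if_pos rfl, smul_eq_mul, mul_one]
      rw [hβ]
      simpa [show lam + α i - α i = lam by abel] using hu
    · simp only [if_neg hij, smul_zero]
      exact zero_mem _)
  -- the last factor decomposes as f1 * f2 * f1
  have hA4 : f1.val * f2.val * f1.val =
      (fromBlocks 0 (-((↑u⁻¹ : A) • 1)) ((↑u : A) • 1) 0 :
        Matrix (Fin n ⊕ Fin n) (Fin n ⊕ Fin n) A) := by
    rw [hw1, hw2]
    simp only [fromBlocks_multiply, Matrix.mul_one, Matrix.one_mul, Matrix.mul_zero,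
      Matrix.zero_mul, add_zero, zero_add, Matrix.neg_mul, Matrix.mul_neg, neg_neg]
    rw [key1, key2]
    simp
  refine ⟨e1 * e2 * e1 * (f1 * f2 * f1),
    mul_mem (mul_mem (mul_mem he1 he2) he1) (mul_mem (mul_mem hf1 hf2) hf1), ?_⟩
  rw [identity]
  simp only [Units.val_mul, hv1, hv2, hA4]
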